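/- arXiv:1408.1129 — 4 statements merged into one kernel-verified Lean document; each statement's English description precedes it below -/
import Mathlib

section
/- Let U = ℂ \ [0,∞) with hyperbolic density ρ_U(w) = 1/(2|w| sin(θ(w)/2)), where θ(w) ∈ (0,2π) is the argument of w. Then for every ζ ∈ U with exp(ζ) ∈ U, the hyperbolic derivative of exp satisfies |exp(ζ)| · ρ_U(exp(ζ))/ρ_U(ζ) ≥ 1/|cos(θ(ζ)/2)| > 1. -/
open Real

/-- The argument of `w` chosen in `(0, 2π)` (for `w` off the nonnegative real axis). -/
noncomputable def argPos (w : ℂ) : ℝ :=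
  if 0 < Complex.arg w then Complex.arg w else Complex.arg w + 2 * π

/-- Density of the hyperbolic metric of `ℂ \ [0,∞)`. -/
noncomputable def rhoU (w : ℂ) : ℝ := 1 / (2 * ‖w‖ * Real.sin (argPos w / 2))

lemma cos_argPos (w : ℂ) : Real.cos (argPos w) = Real.cos (Complex.arg w) := by
  unfold argPos
  split
  · rfl
  · rw [Real.cos_add_two_pi]

lemma sin_argPos (w : ℂ) : Real.sin (argPos w) = Real.sin (Complex.arg w) := by
  unfold argPos
  split
  · rfl
  · rw [Real.sin_add_two_pi]

lemma argPos_mem (w : ℂ) (hw : Complex.arg w ≠ 0) : 0 < argPos w ∧ argPos w < 2 * π := by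
  have h1 := Complex.neg_pi_lt_arg w
  have h2 := Complex.arg_le_pi w
  have hπ := Real.pi_pos
  unfold argPos
  split_ifs with h
  · constructor <;> linarith
  · push_neg at h
    have : Complex.arg w < 0 := lt_of_le_of_ne h hw
    constructor <;> linarith

theorem exp_expands_slit_plane_metric (ζ : ℂ)
    (hζ : ζ.im ≠ 0 ∨ ζ.re < 0) (hexp : (Complex.exp ζ).im ≠ 0 ∨ (Complex.exp ζ).re < 0) :
    1 / |Real.cos (argPos ζ / 2)| ≤
        ‖Complex.exp ζ‖ * (rhoU (Complex.exp ζ) / rhoU ζ) ∧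
      1 < 1 / |Real.cos (argPos ζ / 2)| := by
  have hπ := Real.pi_pos
  have hζ0 : ζ ≠ 0 := by
    rintro rfl
    simp at hζ
  have hargζ : Complex.arg ζ ≠ 0 := by
    intro h
    rw [Complex.arg_eq_zero_iff] at h
    obtain ⟨h1, h2⟩ := h
    rcases hζ with h | h
    · exact h h2
    · linarith
  have harge : Complex.arg (Complex.exp ζ) ≠ 0 := by
    intro h
    rw [Complex.arg_eq_zero_iff] at h
    obtain ⟨h1, h2⟩ := h
    rcases hexp with h | h
    · exact h h2
    · linarith
  have hargζπ : Complex.arg ζ ≠ π := by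
    intro h
    rw [Complex.arg_eq_pi_iff] at h
    obtain ⟨h1, h2⟩ := h
    have him : (Complex.exp ζ).im = 0 := by
      rw [Complex.exp_im, h2]; simp
    have hre : 0 < (Complex.exp ζ).re := by
      rw [Complex.exp_re, h2]; simp [Real.exp_pos]
    rcases hexp with h | h
    · exact h him
    · linarith
  obtain ⟨hθ0, hθ2⟩ := argPos_mem ζ hargζ
  obtain ⟨hφ0, hφ2⟩ := argPos_mem (Complex.exp ζ) harge
  set θ := argPos ζ with hθdef
  set φ := argPos (Complex.exp ζ) with hφdef
  have hθπ : θ ≠ π := by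
    rw [hθdef]
    unfold argPos
    split_ifs with h
    · exact hargζπ
    · have h1 := Complex.neg_pi_lt_arg ζ
      intro he
      linarith
  -- positivity of the half-angle sines
  have hS : 0 < Real.sin (θ / 2) :=
    Real.sin_pos_of_pos_of_lt_pi (by linarith) (by linarith)
  have hT : 0 < Real.sin (φ / 2) :=
    Real.sin_pos_of_pos_of_lt_pi (by linarith) (by linarith)
  have hC : Real.cos (θ / 2) ≠ 0 := by
    intro h
    rw [Real.cos_eq_zero_iff] at h
    obtain ⟨n, hn⟩ := h
    have hn0 : n = 0 := by
      rcases lt_trichotomy n 0 with hlt | heq | hgt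
      · have hle : (n : ℝ) ≤ -1 := by exact_mod_cast (by omega : n ≤ (-1:ℤ))
        nlinarith
      · exact heq
      · have hge : (1 : ℝ) ≤ (n : ℝ) := by exact_mod_cast hgt
        nlinarith
    rw [hn0] at hn
    push_cast at hn
    apply hθπ
    linarith
  have hCabs : 0 < |Real.cos (θ / 2)| := abs_pos.mpr hC
  have hClt : |Real.cos (θ / 2)| < 1 := by
    have h1 : Real.cos (θ / 2) ^ 2 < 1 := by
      have := Real.sin_sq_add_cos_sq (θ / 2)
      nlinarith
    exact (sq_lt_one_iff_abs_lt_one _).mp h1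
  refine ⟨?_, ?_⟩
  · -- main inequality
    have habs : (0 : ℝ) < ‖ζ‖ := by
      simpa [norm_pos_iff] using hζ0
    have habse : (0 : ℝ) < ‖Complex.exp ζ‖ := by
      rw [Complex.norm_exp]; exact Real.exp_pos _
    -- cos φ = cos ζ.im
    have hcosφ : Real.cos φ = Real.cos ζ.im := by
      rw [hφdef, cos_argPos, Complex.cos_arg (Complex.exp_ne_zero ζ),
        Complex.exp_re, Complex.norm_exp]
      field_simp
    -- sin (φ/2) = |sin (ζ.im / 2)|
    have hTsq : Real.sin (φ / 2) ^ 2 = Real.sin (ζ.im / 2) ^ 2 := by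
      have h1 := Real.sin_sq_eq_half_sub (φ / 2)
      have h2 := Real.sin_sq_eq_half_sub (ζ.im / 2)
      rw [mul_div_cancel₀ _ (two_ne_zero)] at h1
      rw [mul_div_cancel₀ _ (two_ne_zero)] at h2
      rw [h1, h2, hcosφ]
    have hTeq : Real.sin (φ / 2) = |Real.sin (ζ.im / 2)| := by
      rw [← Real.sqrt_sq hT.le, hTsq, Real.sqrt_sq_eq_abs]
    -- |ζ.im| = |ζ| * |sin θ|
    have hsinθ : Real.sin θ = ζ.im / ‖ζ‖ := by
      rw [hθdef, sin_argPos, Complex.sin_arg]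
    have him : |ζ.im| = ‖ζ‖ * |Real.sin θ| := by
      rw [hsinθ, abs_div, abs_of_pos habs]
      field_simp
    -- sin θ = 2 sin(θ/2) cos(θ/2)
    have hdouble : Real.sin θ = 2 * Real.sin (θ / 2) * Real.cos (θ / 2) := by
      have := Real.sin_two_mul (θ / 2)
      rw [mul_div_cancel₀ _ (two_ne_zero : (2:ℝ) ≠ 0)] at this
      linarith
    -- key estimate
    have hkey : Real.sin (φ / 2) ≤ ‖ζ‖ * Real.sin (θ / 2) * |Real.cos (θ / 2)| := by
      calc Real.sin (φ / 2) = |Real.sin (ζ.im / 2)| := hTeq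
        _ ≤ |ζ.im / 2| := Real.abs_sin_le_abs
        _ = |ζ.im| / 2 := by rw [abs_div]; norm_num
        _ = ‖ζ‖ * |Real.sin θ| / 2 := by rw [him]
        _ = ‖ζ‖ * Real.sin (θ / 2) * |Real.cos (θ / 2)| := by
            rw [hdouble, abs_mul, abs_mul, abs_of_pos hS]
            rw [abs_of_pos (by norm_num : (0:ℝ) < 2)]
            ring
    -- simplify the RHS
    have hRHS : ‖Complex.exp ζ‖ * (rhoU (Complex.exp ζ) / rhoU ζ) =
        ‖ζ‖ * Real.sin (θ / 2) / Real.sin (φ / 2) := by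
      unfold rhoU
      rw [← hθdef, ← hφdef]
      field_simp
    rw [hRHS, div_le_div_iff₀ hCabs hT]
    calc (1 : ℝ) * Real.sin (φ / 2) = Real.sin (φ / 2) := one_mul _
      _ ≤ ‖ζ‖ * Real.sin (θ / 2) * |Real.cos (θ / 2)| := hkey
      _ = ‖ζ‖ * Real.sin (θ / 2) / 1 * |Real.cos (θ / 2)| := by ring
      _ = ‖ζ‖ * Real.sin (θ / 2) * |Real.cos (θ / 2)| := by ring
  · exact one_lt_one_div hCabs hClt
end

section
/- Let a ≥ 2π and S be a closed square of side length 2π with left edge at real part a. Then exp(S) is the closed annulus {w : e^a ≤ |w| ≤ e^{a+2π}}, and this annulus contains a closed axis-parallel rectangle R of height 2π, symmetric about the imaginary axis, tangent to the circle |w| = e^a from outside, whose horizontal half-length ℓ satisfies ℓ² = e^{2(a+2π)} - (e^a + 2π)² > e^{2a}. -/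
open Real

theorem exp_image_of_square (a y₀ : ℝ) (ha : 2 * π ≤ a)
    (S : Set ℂ) (hS : S = {w : ℂ | a ≤ w.re ∧ w.re ≤ a + 2 * π ∧ y₀ ≤ w.im ∧ w.im ≤ y₀ + 2 * π})
    (ℓ : ℝ) (hℓ : ℓ = Real.sqrt (Real.exp (2 * (a + 2 * π)) - (Real.exp a + 2 * π) ^ 2)) :
    Complex.exp '' S =
        {w : ℂ | Real.exp a ≤ ‖w‖ ∧ ‖w‖ ≤ Real.exp (a + 2 * π)} ∧
      ℓ ^ 2 = Real.exp (2 * (a + 2 * π)) - (Real.exp a + 2 * π) ^ 2 ∧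
      ℓ ^ 2 > Real.exp (2 * a) ∧
      {w : ℂ | |w.re| ≤ ℓ ∧ Real.exp a ≤ w.im ∧ w.im ≤ Real.exp a + 2 * π} ⊆
        {w : ℂ | Real.exp a ≤ ‖w‖ ∧ ‖w‖ ≤ Real.exp (a + 2 * π)} := by
  have hπ : (0:ℝ) < π := Real.pi_pos
  -- key inequality: ℓ² = e^{2(a+2π)} - (e^a+2π)² > e^{2a}
  have h2π : 2 * π ≤ Real.exp a := by
    calc 2 * π ≤ 2 * π + 1 := by linarith
      _ ≤ Real.exp (2 * π) := Real.add_one_le_exp _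
      _ ≤ Real.exp a := Real.exp_le_exp.mpr ha
  have hgt : Real.exp (2 * (a + 2 * π)) - (Real.exp a + 2 * π) ^ 2 > Real.exp (2 * a) := by
    have h1 : Real.exp (2 * (a + 2 * π)) = Real.exp (2 * a) * Real.exp (4 * π) := by
      rw [← Real.exp_add]; ring_nf
    have h2 : (Real.exp a + 2 * π) ^ 2 ≤ 4 * Real.exp (2 * a) := by
      have : Real.exp (2 * a) = Real.exp a * Real.exp a := by rw [← Real.exp_add]; ring_nf
      nlinarith [Real.exp_pos a]
    have h3 : (5:ℝ) < Real.exp (4 * π) := by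
      have h4 : (5:ℝ) ≤ 4 * π := by nlinarith [Real.pi_gt_three]
      calc (5:ℝ) < 5 + 1 := by linarith
        _ ≤ Real.exp 5 := Real.add_one_le_exp _
        _ ≤ Real.exp (4 * π) := Real.exp_le_exp.mpr h4
    nlinarith [Real.exp_pos (2 * a)]
  have hℓsq : ℓ ^ 2 = Real.exp (2 * (a + 2 * π)) - (Real.exp a + 2 * π) ^ 2 := by
    rw [hℓ, sq_sqrt]; nlinarith [Real.exp_pos (2 * a)]
  refine ⟨?_, hℓsq, by rw [hℓsq]; exact hgt, ?_⟩
  · -- image of square is annulus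
    ext w
    simp only [hS, Set.mem_image, Set.mem_setOf_eq]
    constructor
    · rintro ⟨z, ⟨h1, h2, _, _⟩, rfl⟩
      rw [Complex.norm_exp]
      exact ⟨Real.exp_le_exp.mpr h1, Real.exp_le_exp.mpr h2⟩
    · rintro ⟨h1, h2⟩
      have hw0 : w ≠ 0 := by
        intro h
        rw [h] at h1
        simp at h1
        exact absurd h1 (not_le.mpr (Real.exp_pos a))
      set k : ℤ := ⌈(y₀ - w.arg) / (2 * π)⌉ with hk
      refine ⟨Complex.log w + (2 * π * k) * Complex.I, ⟨?_, ?_, ?_, ?_⟩, ?_⟩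
      · simp [Complex.log_re]
        calc a = Real.log (Real.exp a) := (Real.log_exp a).symm
          _ ≤ Real.log (‖w‖) := Real.log_le_log (Real.exp_pos a) h1
      · simp [Complex.log_re]
        calc Real.log (‖w‖) ≤ Real.log (Real.exp (a + 2 * π)) :=
              Real.log_le_log (norm_pos_iff.mpr hw0) h2
          _ = a + 2 * π := Real.log_exp _
      · simp [Complex.log_im]
        have := Int.le_ceil ((y₀ - w.arg) / (2 * π))
        rw [hk]
        have : (y₀ - w.arg) / (2 * π) ≤ (k : ℝ) := Int.le_ceil _
        have h2π' : (0:ℝ) < 2 * π := by linarith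
        rw [div_le_iff₀ h2π'] at this
        linarith
      · simp [Complex.log_im]
        have h2π' : (0:ℝ) < 2 * π := by linarith
        have h0 : ((k : ℝ)) - 1 < (y₀ - w.arg) / (2 * π) := by
          have := Int.ceil_lt_add_one ((y₀ - w.arg) / (2 * π))
          linarith
        have h' := (lt_div_iff₀ h2π').mp h0
        linarith
      · rw [Complex.exp_add]
        rw [Complex.exp_log hw0]
        have : Complex.exp ((2 * π * k) * Complex.I) = 1 := by
          have := Complex.exp_int_mul_two_pi_mul_I k
          rw [← this]; ring_nf
        rw [this, mul_one]
  · -- rectangle inside annulus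
    intro w hw
    simp only [Set.mem_setOf_eq] at hw ⊢
    obtain ⟨hre, him1, him2⟩ := hw
    have habs : (‖w‖) ^ 2 = w.re ^ 2 + w.im ^ 2 := by
      rw [Complex.sq_norm, Complex.normSq_apply]; ring
    have hre2 : w.re ^ 2 ≤ ℓ ^ 2 := sq_le_sq' (neg_le_of_abs_le hre) (le_of_abs_le hre)
    constructor
    · have h1 : Real.exp a ^ 2 ≤ (‖w‖) ^ 2 := by
        rw [habs]; nlinarith [Real.exp_pos a, sq_nonneg w.re]
      nlinarith [norm_nonneg w, Real.exp_pos a]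
    · have h1 : (‖w‖) ^ 2 ≤ Real.exp (a + 2 * π) ^ 2 := by
        rw [habs]
        have him2' : w.im ^ 2 ≤ (Real.exp a + 2 * π) ^ 2 := by
          nlinarith [Real.exp_pos a]
        have he : Real.exp (2 * (a + 2 * π)) = Real.exp (a + 2 * π) * Real.exp (a + 2 * π) := by
          rw [← Real.exp_add]; ring_nf
        nlinarith
      nlinarith [norm_nonneg w, Real.exp_pos (a + 2 * π)]
end

section
/- Every periodic point of the complex exponential map is repelling: if exp^n(p) = p for some n ≥ 1, then |(exp^n)'(p)| > 1. -/
private lemma lt_exp_self (x : ℝ) : x < Real.exp x :=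
  lt_of_lt_of_le (by linarith) (Real.add_one_le_exp x)

private lemma real_iter_gt (x : ℝ) (m : ℕ) : x < Real.exp^[m + 1] x := by
  induction m with
  | zero => simpa using lt_exp_self x
  | succ m ih =>
      rw [Function.iterate_succ_apply']
      exact ih.trans (lt_exp_self _)

private lemma cexp_iter_real (x : ℝ) (m : ℕ) :
    Complex.exp^[m] (x : ℂ) = ((Real.exp^[m] x : ℝ) : ℂ) := by
  induction m with
  | zero => rfl
  | succ m ih =>
      rw [Function.iterate_succ_apply', Function.iterate_succ_apply', ih,
        ← Complex.ofReal_exp]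

theorem periodic_points_repelling (p : ℂ) (n : ℕ) (hn : 1 ≤ n)
    (hp : Complex.exp^[n] p = p) :
    1 < ‖∏ k ∈ Finset.range n, Complex.exp (Complex.exp^[k] p)‖ := by
  set f : ℕ → ℂ := fun k => Complex.exp^[k] p with hf
  have hstep : ∀ k, f (k + 1) = Complex.exp (f k) := fun k =>
    Function.iterate_succ_apply' _ _ _
  have hper : f n = f 0 := by simpa [hf] using hp
  -- each orbit point is non-real
  have him : ∀ k, (f k).im ≠ 0 := by
    intro k h0
    have hperk : Complex.exp^[n] (f k) = f k := by
      simp only [hf, ← Function.iterate_add_apply]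
      rw [Nat.add_comm, Function.iterate_add_apply, hp]
    have hre : f k = ((f k).re : ℂ) := by
      conv_lhs => rw [← Complex.re_add_im (f k)]
      rw [h0]; simp
    rw [hre, cexp_iter_real] at hperk
    have hreal : Real.exp^[n] (f k).re = (f k).re := by exact_mod_cast hperk
    obtain ⟨m, rfl⟩ := Nat.exists_eq_add_of_le hn
    rw [Nat.add_comm 1 m] at hreal
    linarith [real_iter_gt (f k).re m, hreal]
  set y : ℕ → ℝ := fun k => |(f k).im| with hy
  set r : ℕ → ℝ := fun k => ‖f k‖ with hr
  have hy_pos : ∀ k, 0 < y k := fun k => abs_pos.mpr (him k)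
  have hr_pos : ∀ k, 0 < r k := fun k =>
    lt_of_lt_of_le (hy_pos k) (Complex.abs_im_le_norm (f k))
  have h1 : ∀ k, y (k + 1) = r (k + 1) * |Real.sin (f k).im| := by
    intro k
    have hrk : r (k + 1) = Real.exp (f k).re := by
      rw [hr]; simp only; rw [hstep k, Complex.norm_exp]
    have h2 : (f (k + 1)).im = Real.exp (f k).re * Real.sin (f k).im := by
      rw [hstep k, Complex.exp_im]
    rw [hy]; simp only
    rw [h2, abs_mul, abs_of_pos (Real.exp_pos _), hrk]
  have hsin_pos : ∀ k, 0 < |Real.sin (f k).im| := by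
    intro k
    rcases eq_or_ne (Real.sin (f k).im) 0 with h | h
    · exfalso
      have h2 := h1 k
      rw [h, abs_zero, mul_zero] at h2
      exact (hy_pos (k + 1)).ne' h2
    · exact abs_pos.mpr h
  have shift : ∀ g : ℕ → ℝ, g n = g 0 → g 0 ≠ 0 →
      ∏ k ∈ Finset.range n, g (k + 1) = ∏ k ∈ Finset.range n, g k := by
    intro g hg h0
    have ha : ∏ k ∈ Finset.range (n + 1), g k = (∏ k ∈ Finset.range n, g (k + 1)) * g 0 :=
      Finset.prod_range_succ' g n
    have hb : ∏ k ∈ Finset.range (n + 1), g k = (∏ k ∈ Finset.range n, g k) * g n :=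
      Finset.prod_range_succ g n
    rw [hg] at hb
    exact mul_right_cancel₀ h0 (ha.symm.trans hb)
  have hyshift : ∏ k ∈ Finset.range n, y (k + 1) = ∏ k ∈ Finset.range n, y k :=
    shift y (by rw [hy]; simp only; rw [hper]) (hy_pos 0).ne'
  have hrshift : ∏ k ∈ Finset.range n, r (k + 1) = ∏ k ∈ Finset.range n, r k :=
    shift r (by rw [hr]; simp only; rw [hper]) (hr_pos 0).ne'
  have hYpos : 0 < ∏ k ∈ Finset.range n, y k := Finset.prod_pos fun k _ => hy_pos k
  have key : ∏ k ∈ Finset.range n, y k <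
      (∏ k ∈ Finset.range n, r k) * ∏ k ∈ Finset.range n, y k := by
    calc ∏ k ∈ Finset.range n, y k = ∏ k ∈ Finset.range n, y (k + 1) := hyshift.symm
    _ = ∏ k ∈ Finset.range n, (r (k + 1) * |Real.sin (f k).im|) :=
        Finset.prod_congr rfl fun k _ => h1 k
    _ = (∏ k ∈ Finset.range n, r (k + 1)) * ∏ k ∈ Finset.range n, |Real.sin (f k).im| :=
        Finset.prod_mul_distrib
    _ < (∏ k ∈ Finset.range n, r (k + 1)) * ∏ k ∈ Finset.range n, y k := by
        refine mul_lt_mul_of_pos_left ?_ (Finset.prod_pos fun k _ => hr_pos (k + 1))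
        exact Finset.prod_lt_prod_of_nonempty (fun k _ => hsin_pos k)
          (fun k _ => Real.abs_sin_lt_abs (him k)) (Finset.nonempty_range_iff.mpr (by omega))
    _ = _ := by rw [hrshift]
  have hR : 1 < ∏ k ∈ Finset.range n, r k := (lt_mul_iff_one_lt_left hYpos).mp key
  have hfin : ‖∏ k ∈ Finset.range n, Complex.exp (Complex.exp^[k] p)‖
      = ∏ k ∈ Finset.range n, r (k + 1) := by
    rw [norm_prod]
    exact Finset.prod_congr rfl fun k _ => by rw [hr]; simp only; rw [hstep k]
  rw [hfin, hrshift]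
  exact hR
end

section
/- Let z_0 ∈ ℂ with exp^n(z_0) ≠ 0 for all n (automatic since exp never vanishes, assuming z_0 arbitrary, note exp^n(z_0) ≠ 0 for n ≥ 1), and suppose |exp^n(z_0)| ≥ 2π + 2 for all n ≥ 1. Then for each n ≥ 1 there is a holomorphic map φ_n on the disc D_n = D_{2π}(exp^n(z_0)) with φ_n(exp^n(z_0)) = z_0, exp^n(φ_n(z)) = z for all z ∈ D_n, and |φ_n'(z)| ≤ 2^{-n} for all z ∈ D_n. -/
open Real Metric

lemma branch_log (w c : ℂ) (hc : Complex.exp c = w)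
    (hw : 2 * π + 2 ≤ ‖w‖) :
    ∃ L : ℂ → ℂ, L w = c ∧
      ∀ z ∈ ball w (2 * π), HasDerivAt L z⁻¹ z ∧ Complex.exp (L z) = z ∧
        ‖z⁻¹‖ ≤ 1 / 2 ∧ L z ∈ ball c (2 * π) := by
  have hπ : 0 < π := Real.pi_pos
  have hw0 : w ≠ 0 := by
    intro h0; rw [h0] at hw; simp at hw; nlinarith
  refine ⟨fun z => c + Complex.log (z / w), by simp [div_self hw0], ?_⟩
  -- preliminary facts for points of the ball
  have key : ∀ z ∈ ball w (2 * π), 2 < ‖z‖ ∧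
      HasDerivAt (fun z => c + Complex.log (z / w)) z⁻¹ z ∧
      Complex.exp (c + Complex.log (z / w)) = z := by
    intro z hz
    rw [mem_ball, Complex.dist_eq] at hz
    have habs : 2 < ‖z‖ := by
      have h1 : ‖w‖ ≤ ‖z‖ + ‖z - w‖ := by
        calc ‖w‖ = ‖z - (z - w)‖ := by ring_nf
          _ ≤ ‖z‖ + ‖z - w‖ := by
            exact norm_sub_le z (z - w)
      linarith
    have hz0 : z ≠ 0 := by intro h0; rw [h0] at habs; simp at habs; linarith
    have hslit : z / w ∈ Complex.slitPlane := by
      have h1 : ‖z / w - 1‖ < 1 := by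
        have : z / w - 1 = (z - w) / w := by field_simp
        rw [this, norm_div]
        rw [div_lt_one (by linarith)]
        linarith
      refine Complex.mem_slitPlane_iff.mpr (Or.inl ?_)
      have h2 : |(z / w - 1).re| ≤ ‖z / w - 1‖ := Complex.abs_re_le_norm _
      have h3 : (z / w - 1).re = (z / w).re - 1 := by simp
      have hl := neg_le_of_abs_le h2
      linarith
    have hderiv : HasDerivAt (fun z => c + Complex.log (z / w)) z⁻¹ z := by
      have h1 : HasDerivAt (fun y : ℂ => y / w) (1 / w) z := by
        simpa using (hasDerivAt_id z).div_const w
      have h2 := (Complex.hasDerivAt_log hslit).comp z h1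
      have h4 := h2.const_add c
      have h3 : (z / w)⁻¹ * (1 / w) = z⁻¹ := by
        field_simp
      rw [h3] at h4
      simpa [Function.comp] using h4
    refine ⟨habs, hderiv, ?_⟩
    rw [Complex.exp_add, hc, Complex.exp_log (div_ne_zero hz0 hw0)]
    field_simp
  intro z hz
  obtain ⟨habs, hderiv, hexp⟩ := key z hz
  refine ⟨hderiv, hexp, ?_, ?_⟩
  · rw [norm_inv]
    rw [inv_le_comm₀ (by linarith) (by norm_num)]
    linarith
  · -- mean value estimate on the convex ball
    have hmv := (convex_ball w (2*π)).norm_image_sub_le_of_norm_hasDerivWithin_le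
      (f := fun z => c + Complex.log (z / w)) (f' := fun z => z⁻¹) (C := 1/2)
      (fun x hx => ((key x hx).2.1).hasDerivWithinAt)
      (fun x hx => by
        have hx2 := (key x hx).1
        rw [norm_inv, inv_le_comm₀ (by linarith) (by norm_num)]
        linarith)
      (mem_ball_self (by positivity)) hz
    have hLw : (fun z => c + Complex.log (z / w)) w = c := by simp [div_self hw0]
    rw [show Complex.log (w / w) = 0 by simp [div_self hw0], add_zero] at hmv
    rw [mem_ball, dist_eq_norm]
    rw [mem_ball, Complex.dist_eq] at hz
    calc ‖(c + Complex.log (z / w)) - c‖ ≤ 1/2 * ‖z - w‖ := hmv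
      _ < 2 * π := by nlinarith

theorem inverse_branches_along_orbit (z₀ : ℂ)
    (h : ∀ n : ℕ, 1 ≤ n → 2 * π + 2 ≤ ‖Complex.exp^[n] z₀‖) :
    ∀ n : ℕ, 1 ≤ n → ∃ φ : ℂ → ℂ,
      DifferentiableOn ℂ φ (ball (Complex.exp^[n] z₀) (2 * π)) ∧
      φ (Complex.exp^[n] z₀) = z₀ ∧
      ∀ z ∈ ball (Complex.exp^[n] z₀) (2 * π),
        Complex.exp^[n] (φ z) = z ∧ ‖deriv φ z‖ ≤ (1 / 2) ^ n := by
  intro n hn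
  induction n, hn using Nat.le_induction with
  | base =>
    have hc : Complex.exp z₀ = Complex.exp^[1] z₀ := by simp
    obtain ⟨L, hLw, hL⟩ := branch_log (Complex.exp^[1] z₀) z₀ hc (h 1 le_rfl)
    refine ⟨L, fun z hz => ((hL z hz).1).differentiableAt.differentiableWithinAt, hLw, ?_⟩
    intro z hz
    obtain ⟨hd, he, hb, _⟩ := hL z hz
    refine ⟨by simpa using he, ?_⟩
    rw [hd.deriv]
    simpa using hb
  | succ n hn ih =>
    obtain ⟨φ, hφd, hφ0, hφ⟩ := ih
    set c := Complex.exp^[n] z₀ with hcdef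
    have hc : Complex.exp c = Complex.exp^[n+1] z₀ :=
      (Function.iterate_succ_apply' Complex.exp n z₀).symm
    obtain ⟨L, hLw, hL⟩ := branch_log (Complex.exp^[n+1] z₀) c hc (h (n+1) (by omega))
    refine ⟨φ ∘ L, ?_, by show φ (L (Complex.exp^[n+1] z₀)) = z₀; rw [hLw, hφ0], ?_⟩
    · intro z hz
      exact ((hφd.differentiableAt (isOpen_ball.mem_nhds (hL z hz).2.2.2)).comp z
        (hL z hz).1.differentiableAt).differentiableWithinAt
    · intro z hz
      obtain ⟨hd, he, hb, hmem⟩ := hL z hz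
      constructor
      · rw [Function.iterate_succ_apply', Function.comp_apply, (hφ (L z) hmem).1, he]
      · rw [deriv_comp z (hφd.differentiableAt (isOpen_ball.mem_nhds hmem))
          hd.differentiableAt, norm_mul, hd.deriv]
        calc ‖deriv φ (L z)‖ * ‖z⁻¹‖
            ≤ (1/2)^n * (1/2) := by
              apply mul_le_mul (hφ (L z) hmem).2 hb (by positivity) (by positivity)
          _ = (1/2)^(n+1) := by ring
end
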